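/- Let ψ: ℝ³ → ℝ be a continuous helix with pitch P ≠ 0 (integrable enough that projections exist), and let t₀, t ∈ ℝ with θ = (2π/P)(t - t₀). Then the projection of the segment at position t equals the rotated projection of the segment at t₀: for all (x,y), ∫ ψ((x,y,z)ᵀ - t x̂) dz = ∫ ψ(R_x(θ)(x,y,z)ᵀ - t₀ x̂) dz. -/
import Mathlib


open Matrix MeasureTheory Real

noncomputable def Rx (θ : ℝ) : Matrix (Fin 3) (Fin 3) ℝ :=
  !![1, 0, 0; 0, Real.cos θ, -Real.sin θ; 0, Real.sin θ, Real.cos θ]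

def xhat : Fin 3 → ℝ := ![1, 0, 0]

theorem stmt4 (ψ : (Fin 3 → ℝ) → ℝ) (P : ℝ) (hP : P ≠ 0)
    (hhelix : ∀ (r : Fin 3 → ℝ) (s : ℝ),
      ψ r = ψ ((Rx (2 * π * s / P)).mulVec r + s • xhat))
    (hint : ∀ (x y : ℝ) (t : ℝ), Integrable (fun z : ℝ => ψ (![x, y, z] - t • xhat)))
    (t₀ t : ℝ) (θ : ℝ) (hθ : θ = 2 * π / P * (t - t₀)) :
    ∀ x y : ℝ,
      (∫ z : ℝ, ψ (![x, y, z] - t • xhat)) =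
        ∫ z : ℝ, ψ ((Rx θ).mulVec ![x, y, z] - t₀ • xhat) := by
  intro x y
  congr 1
  funext z
  have hθ' : 2 * π * (t - t₀) / P = θ := by rw [hθ]; ring
  have h := hhelix (![x, y, z] - t • xhat) (t - t₀)
  rw [hθ'] at h
  rw [h]
  congr 1
  funext i
  fin_cases i <;>
    simp [Rx, xhat, mulVec, dotProduct, Fin.sum_univ_three] <;> ring
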